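/- Let g_ε : C² → C² be g_ε(z₁,z₂) = (z₁ + ε·P(z₁,z₂), z₂) where P is a polynomial with P(0)=0 and DP(0)=0. Then there exists δ > 0 such that for all ε ∈ C with |ε| < δ, the restriction of g_ε to D² is locally biholomorphic, g_ε(0)=0, Dg_ε(0)=I₂, and -(Dg_ε(z))⁻¹·g_ε(z) belongs to M(D²); i.e. g_ε is starlike on D² for all sufficiently small ε. -/

import Mathlib

open Complex

def polydisc2 : Set (ℂ × ℂ) := {z | ‖z.1‖ < 1 ∧ ‖z.2‖ < 1}

/-- The class `M(D²)` of infinitesimal generators on the unit polydisc in `ℂ²`. -/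
def memM2 (h : ℂ × ℂ → ℂ × ℂ) : Prop :=
  DifferentiableOn ℂ h polydisc2 ∧ h 0 = 0 ∧
    fderiv ℂ h 0 = -ContinuousLinearMap.id ℂ (ℂ × ℂ) ∧
    (∀ z ∈ polydisc2, z.1 ≠ 0 → ‖z.2‖ ≤ ‖z.1‖ → ((h z).1 / z.1).re ≤ 0) ∧
    (∀ z ∈ polydisc2, z.2 ≠ 0 → ‖z.1‖ ≤ ‖z.2‖ → ((h z).2 / z.2).re ≤ 0)

open MvPolynomial

noncomputable section Helpers

/-- The continuous linear map `w ↦ a w₁ + b w₂`. -/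
def lin2 (a b : ℂ) : (ℂ × ℂ) →L[ℂ] ℂ :=
  a • ContinuousLinearMap.fst ℂ ℂ ℂ + b • ContinuousLinearMap.snd ℂ ℂ ℂ

@[simp] lemma lin2_apply (a b : ℂ) (w : ℂ × ℂ) : lin2 a b w = a * w.1 + b * w.2 := by
  simp [lin2, smul_eq_mul]

def ev (p : MvPolynomial (Fin 2) ℂ) (z : ℂ × ℂ) : ℂ :=
  MvPolynomial.eval (fun i : Fin 2 => if i = 0 then z.1 else z.2) p

lemma ev_eq (p : MvPolynomial (Fin 2) ℂ) (z : ℂ × ℂ) :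
    ev p z = ∑ d ∈ p.support, coeff d p * (z.1 ^ d 0 * z.2 ^ d 1) := by
  rw [ev, eval_eq']
  refine Finset.sum_congr rfl fun d _ => ?_
  rw [Fin.prod_univ_two]
  simp

def Q1 (p : MvPolynomial (Fin 2) ℂ) (z : ℂ × ℂ) : ℂ :=
  ∑ d ∈ p.support, coeff d p * ((d 0 : ℂ) * z.1 ^ (d 0 - 1) * z.2 ^ d 1)

def Q2 (p : MvPolynomial (Fin 2) ℂ) (z : ℂ × ℂ) : ℂ :=
  ∑ d ∈ p.support, coeff d p * ((d 1 : ℂ) * z.2 ^ (d 1 - 1) * z.1 ^ d 0)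

lemma hasFDerivAt_monomial (c : ℂ) (m n : ℕ) (z : ℂ × ℂ) :
    HasFDerivAt (fun z : ℂ × ℂ => c * (z.1 ^ m * z.2 ^ n))
      (lin2 (c * ((m : ℂ) * z.1 ^ (m - 1) * z.2 ^ n)) (c * ((n : ℂ) * z.2 ^ (n - 1) * z.1 ^ m))) z := by
  have h1 : HasFDerivAt (fun z : ℂ × ℂ => z.1 ^ m)
      (((m : ℂ) * z.1 ^ (m - 1)) • ContinuousLinearMap.fst ℂ ℂ ℂ) z :=
    (hasDerivAt_pow m z.1).comp_hasFDerivAt z (hasFDerivAt_fst)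
  have h2 : HasFDerivAt (fun z : ℂ × ℂ => z.2 ^ n)
      (((n : ℂ) * z.2 ^ (n - 1)) • ContinuousLinearMap.snd ℂ ℂ ℂ) z :=
    (hasDerivAt_pow n z.2).comp_hasFDerivAt z (hasFDerivAt_snd)
  have h := ((h1.mul h2).const_mul c)
  refine h.congr_fderiv ?_
  refine ContinuousLinearMap.ext fun w => ?_
  simp [lin2, smul_eq_mul]
  ring

lemma hasFDerivAt_ev (p : MvPolynomial (Fin 2) ℂ) (z : ℂ × ℂ) :
    HasFDerivAt (ev p) (lin2 (Q1 p z) (Q2 p z)) z := by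
  have : HasFDerivAt (fun z : ℂ × ℂ => ∑ d ∈ p.support, coeff d p * (z.1 ^ d 0 * z.2 ^ d 1))
      (∑ d ∈ p.support, lin2 (coeff d p * ((d 0 : ℂ) * z.1 ^ (d 0 - 1) * z.2 ^ d 1))
        (coeff d p * ((d 1 : ℂ) * z.2 ^ (d 1 - 1) * z.1 ^ d 0))) z :=
    HasFDerivAt.fun_sum fun d _ => hasFDerivAt_monomial _ _ _ _
  have hfun : (ev p) = fun z : ℂ × ℂ => ∑ d ∈ p.support, coeff d p * (z.1 ^ d 0 * z.2 ^ d 1) :=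
    funext fun z => (ev_eq p z :)
  rw [hfun]
  refine this.congr_fderiv ?_
  refine ContinuousLinearMap.ext fun w => ?_
  simp only [ContinuousLinearMap.sum_apply, lin2_apply, Q1, Q2, Finset.sum_mul,
    Finset.sum_add_distrib]

lemma differentiable_Q1 (p : MvPolynomial (Fin 2) ℂ) : Differentiable ℂ (Q1 p) := by
  refine Differentiable.fun_sum fun d _ => ?_
  exact (((differentiable_const _).mul ((differentiable_fst.pow _))).mul
    (differentiable_snd.pow _)).const_mul _

lemma differentiable_Q2 (p : MvPolynomial (Fin 2) ℂ) : Differentiable ℂ (Q2 p) := by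
  refine Differentiable.fun_sum fun d _ => ?_
  exact (((differentiable_const _).mul ((differentiable_snd.pow _))).mul
    (differentiable_fst.pow _)).const_mul _

end Helpers

open Complex MvPolynomial

noncomputable section Helpers2
variable (p : MvPolynomial (Fin 2) ℂ)

def Cp : ℝ := ∑ d ∈ p.support, ‖coeff d p‖ * (1 + d 0 + d 1)

lemma Cp_nonneg : 0 ≤ Cp p :=
  Finset.sum_nonneg fun d _ => mul_nonneg (norm_nonneg _) (by positivity)

lemma pow2_le {a b : ℝ} (ha0 : 0 ≤ a) (hb : 0 ≤ b) (hba : b ≤ a) (ha : a ≤ 1) {m n : ℕ}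
    (h : 1 ≤ m + n) : a ^ m * b ^ n ≤ a := by
  calc a ^ m * b ^ n ≤ a ^ m * a ^ n :=
        mul_le_mul_of_nonneg_left (pow_le_pow_left₀ hb hba n) (pow_nonneg ha0 m)
    _ = a ^ (m + n) := (pow_add a m n).symm
    _ ≤ a ^ 1 := pow_le_pow_of_le_one ha0 ha h
    _ = a := pow_one a

lemma ev_zero : ev p 0 = constantCoeff p := by
  have : (fun i : Fin 2 => if i = 0 then (0 : ℂ × ℂ).1 else (0 : ℂ × ℂ).2) = (0 : Fin 2 → ℂ) := by
    funext i; simp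
  rw [ev, this, MvPolynomial.eval_zero]

variable {z : ℂ × ℂ}

lemma abs_Q1_le (h1 : ‖z.1‖ ≤ 1) (h2 : ‖z.2‖ ≤ 1) :
    ‖Q1 p z‖ ≤ Cp p := by
  refine (norm_sum_le _ _).trans (Finset.sum_le_sum fun d _ => ?_)
  rw [norm_mul, norm_mul, norm_mul, norm_pow, norm_pow]
  refine mul_le_mul_of_nonneg_left ?_ (norm_nonneg _)
  have hd0 : ‖(d 0 : ℂ)‖ = (d 0 : ℝ) := by
    rw [Complex.norm_natCast]
  calc ‖(d 0 : ℂ)‖ * ‖z.1‖ ^ (d 0 - 1) * ‖z.2‖ ^ d 1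
      ≤ (d 0 : ℝ) * 1 * 1 := by
        rw [hd0]
        gcongr
        · exact pow_le_one₀ (norm_nonneg _) h1
        · exact pow_le_one₀ (norm_nonneg _) h2
    _ ≤ 1 + d 0 + d 1 := by push_cast; nlinarith [Nat.cast_nonneg (α := ℝ) (d 0), Nat.cast_nonneg (α := ℝ) (d 1)]

lemma abs_Q2_mul_le (h1 : ‖z.1‖ ≤ 1) (h2 : ‖z.2‖ ≤ ‖z.1‖) :
    ‖Q2 p z * z.2‖ ≤ Cp p * ‖z.1‖ := by
  rw [Q2, Finset.sum_mul, Cp, Finset.sum_mul]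
  refine (norm_sum_le _ _).trans (Finset.sum_le_sum fun d _ => ?_)
  rcases Nat.eq_zero_or_pos (d 1) with h | h
  · simp [h]
    positivity
  · have hz : z.2 ^ (d 1 - 1) * z.2 = z.2 ^ d 1 := by
      rw [← pow_succ, Nat.sub_add_cancel h]
    have hterm : coeff d p * ((d 1 : ℂ) * z.2 ^ (d 1 - 1) * z.1 ^ d 0) * z.2
        = coeff d p * ((d 1 : ℂ) * (z.2 ^ d 1 * z.1 ^ d 0)) := by
      rw [← hz]; ring
    rw [hterm, norm_mul, norm_mul, norm_mul, norm_pow, norm_pow, Complex.norm_natCast]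
    have hkey : ‖z.1‖ ^ d 0 * ‖z.2‖ ^ d 1 ≤ ‖z.1‖ :=
      pow2_le (norm_nonneg _) (norm_nonneg _) h2 h1 (by omega)
    calc ‖coeff d p‖ * ((d 1 : ℝ) * (‖z.2‖ ^ d 1 * ‖z.1‖ ^ d 0))
        ≤ ‖coeff d p‖ * ((d 1 : ℝ) * ‖z.1‖) := by
          rw [mul_comm (‖z.2‖ ^ d 1)]
          gcongr
      _ ≤ ‖coeff d p‖ * ((1 + d 0 + d 1) * ‖z.1‖) := by
          gcongr
          nlinarith [Nat.cast_nonneg (α := ℝ) (d 0), Nat.cast_nonneg (α := ℝ) (d 1)]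
      _ = ‖coeff d p‖ * (1 + d 0 + d 1) * ‖z.1‖ := by ring

lemma abs_ev_le (hc : constantCoeff p = 0) (h1 : ‖z.1‖ ≤ 1)
    (h2 : ‖z.2‖ ≤ ‖z.1‖) :
    ‖ev p z‖ ≤ Cp p * ‖z.1‖ := by
  rw [ev_eq, Cp, Finset.sum_mul]
  refine (norm_sum_le _ _).trans (Finset.sum_le_sum fun d _ => ?_)
  rcases eq_or_ne d 0 with rfl | hd
  · have : coeff 0 p = 0 := hc
    simp [this]
  · have hdeg : 1 ≤ d 0 + d 1 := by
      rcases Finsupp.ne_iff.mp hd with ⟨i, hi⟩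
      simp only [Finsupp.coe_zero, Pi.zero_apply] at hi
      have hor : d 0 ≠ 0 ∨ d 1 ≠ 0 := by
        fin_cases i
        · exact Or.inl hi
        · exact Or.inr hi
      omega
    rw [norm_mul, norm_mul, norm_pow, norm_pow]
    have hkey : ‖z.1‖ ^ d 0 * ‖z.2‖ ^ d 1 ≤ ‖z.1‖ :=
      pow2_le (norm_nonneg _) (norm_nonneg _) h2 h1 hdeg
    calc ‖coeff d p‖ * (‖z.1‖ ^ d 0 * ‖z.2‖ ^ d 1)
        ≤ ‖coeff d p‖ * ‖z.1‖ := by gcongr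
      _ ≤ ‖coeff d p‖ * (1 + d 0 + d 1) * ‖z.1‖ := by
          rw [mul_assoc]
          gcongr
          nlinarith [Nat.cast_nonneg (α := ℝ) (d 0), norm_nonneg z.1,
            Nat.cast_nonneg (α := ℝ) (d 1)]

end Helpers2

noncomputable section Helpers3

/-- Upper-triangular matrix `(w₁,w₂) ↦ (c w₁ + q w₂, w₂)` as a continuous linear map. -/
def Bmat (c q : ℂ) : (ℂ × ℂ) →L[ℂ] (ℂ × ℂ) :=
  (lin2 c q).prod (ContinuousLinearMap.snd ℂ ℂ ℂ)

@[simp] lemma Bmat_apply (c q : ℂ) (w : ℂ × ℂ) : Bmat c q w = (c * w.1 + q * w.2, w.2) := by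
  simp [Bmat]

lemma Bmat_mul (c q c' q' : ℂ) : Bmat c q * Bmat c' q' = Bmat (c * c') (c * q' + q) := by
  refine ContinuousLinearMap.ext fun w => ?_
  simp [ContinuousLinearMap.mul_apply]
  ring

lemma Bmat_one : Bmat 1 0 = 1 := by
  refine ContinuousLinearMap.ext fun w => ?_
  simp

lemma Bmat_id : Bmat 1 0 = ContinuousLinearMap.id ℂ (ℂ × ℂ) := Bmat_one

/-- The inverse of `Bmat c q` when `c ≠ 0`. -/
def Bmatinv (c q : ℂ) : (ℂ × ℂ) →L[ℂ] (ℂ × ℂ) := Bmat c⁻¹ (-(c⁻¹ * q))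

lemma Bmat_mul_inv {c : ℂ} (q : ℂ) (hc : c ≠ 0) : Bmat c q * Bmatinv c q = 1 := by
  rw [Bmatinv, Bmat_mul, mul_inv_cancel₀ hc, Bmat_one.symm]
  congr 1
  field_simp
  ring

lemma Bmat_inv_mul {c : ℂ} (q : ℂ) (hc : c ≠ 0) : Bmatinv c q * Bmat c q = 1 := by
  rw [Bmatinv, Bmat_mul, inv_mul_cancel₀ hc, Bmat_one.symm]
  congr 1
  field_simp
  ring

/-- `Bmat c q` as a unit. -/
def BmatUnit {c : ℂ} (q : ℂ) (hc : c ≠ 0) : ((ℂ × ℂ) →L[ℂ] (ℂ × ℂ))ˣ :=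
  ⟨Bmat c q, Bmatinv c q, Bmat_mul_inv q hc, Bmat_inv_mul q hc⟩

lemma isUnit_Bmat {c : ℂ} (q : ℂ) (hc : c ≠ 0) : IsUnit (Bmat c q) :=
  ⟨BmatUnit q hc, rfl⟩

lemma ringInverse_Bmat {c : ℂ} (q : ℂ) (hc : c ≠ 0) :
    Ring.inverse (Bmat c q) = Bmatinv c q :=
  Ring.inverse_unit (BmatUnit q hc)

lemma abs_one_add_ge (x : ℂ) : 1 - ‖x‖ ≤ ‖1 + x‖ := by
  have h := norm_add_le (1 + x) (-x)
  simp at h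
  linarith

end Helpers3

noncomputable section Helpers4

lemma hasFDerivAt_g (p : MvPolynomial (Fin 2) ℂ) (ε : ℂ) (z : ℂ × ℂ) :
    HasFDerivAt (fun z : ℂ × ℂ => (z.1 + ε * ev p z, z.2))
      (Bmat (1 + ε * Q1 p z) (ε * Q2 p z)) z := by
  have h1 : HasFDerivAt (fun z : ℂ × ℂ => z.1 + ε * ev p z)
      (ContinuousLinearMap.fst ℂ ℂ ℂ + ε • lin2 (Q1 p z) (Q2 p z)) z :=
    (hasFDerivAt_fst).add ((hasFDerivAt_ev p z).const_mul ε)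
  have h2 := h1.prodMk (hasFDerivAt_snd (p := z))
  refine h2.congr_fderiv ?_
  refine ContinuousLinearMap.ext fun w => ?_
  simp [Bmat, lin2, smul_eq_mul, Prod.ext_iff]
  ring

end Helpers4

set_option maxHeartbeats 1000000 in
set_option synthInstance.maxHeartbeats 200000 in
/-- Small polynomial shears of the identity are starlike: if `P` is a polynomial on `ℂ²`
with `P(0) = 0` and `DP(0) = 0`, then there is `δ > 0` such that for all `|ε| < δ` the map
`g_ε(z) = (z₁ + εP(z), z₂)` is normalized, locally biholomorphic on `D²`, and
`-(Dg_ε)⁻¹·g_ε ∈ M(D²)`. -/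
theorem small_polynomial_shear_starlike (P : ℂ × ℂ → ℂ)
    (hPpoly : ∃ p : MvPolynomial (Fin 2) ℂ,
      ∀ z : ℂ × ℂ, P z = MvPolynomial.eval (fun i : Fin 2 => if i = 0 then z.1 else z.2) p)
    (hP0 : P 0 = 0) (hDP0 : fderiv ℂ P 0 = 0) :
    ∃ δ : ℝ, 0 < δ ∧ ∀ ε : ℂ, ‖ε‖ < δ →
      (fun z : ℂ × ℂ => (z.1 + ε * P z, z.2)) 0 = 0 ∧
      fderiv ℂ (fun z : ℂ × ℂ => (z.1 + ε * P z, z.2)) 0 = ContinuousLinearMap.id ℂ (ℂ × ℂ) ∧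
      (∀ z ∈ polydisc2, IsUnit (fderiv ℂ (fun z : ℂ × ℂ => (z.1 + ε * P z, z.2)) z)) ∧
      memM2 (fun z : ℂ × ℂ =>
        -(Ring.inverse (fderiv ℂ (fun z : ℂ × ℂ => (z.1 + ε * P z, z.2)) z))
          ((z.1 + ε * P z, z.2))) := by
  obtain ⟨p, hp⟩ := hPpoly
  have hPe : P = ev p := funext fun z => hp z
  subst hPe
  have hconst : constantCoeff p = 0 := by rw [← ev_zero]; exact hP0
  have hlin : lin2 (Q1 p 0) (Q2 p 0) = 0 := by
    rw [← (hasFDerivAt_ev p 0).fderiv]; exact hDP0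
  have hQ10 : Q1 p 0 = 0 := by
    have h := congrArg (fun L : (ℂ × ℂ) →L[ℂ] ℂ => L (1, 0)) hlin
    simpa using h
  have hQ20 : Q2 p 0 = 0 := by
    have h := congrArg (fun L : (ℂ × ℂ) →L[ℂ] ℂ => L (0, 1)) hlin
    simpa using h
  have hC0 : 0 ≤ Cp p := Cp_nonneg p
  refine ⟨1 / (4 * (Cp p + 1)), by positivity, ?_⟩
  intro ε hε
  have hεC : ‖ε‖ * Cp p < 1 / 4 := by
    have h1 : ‖ε‖ * (Cp p + 1) < (1 / (4 * (Cp p + 1))) * (Cp p + 1) :=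
      mul_lt_mul_of_pos_right hε (by linarith)
    have h2 : (1 / (4 * (Cp p + 1))) * (Cp p + 1) = 1 / 4 := by field_simp
    nlinarith [norm_nonneg ε]
  have hgD : ∀ z : ℂ × ℂ, fderiv ℂ (fun z : ℂ × ℂ => (z.1 + ε * ev p z, z.2)) z
      = Bmat (1 + ε * Q1 p z) (ε * Q2 p z) := fun z => (hasFDerivAt_g p ε z).fderiv
  have hcne : ∀ z : ℂ × ℂ, ‖z.1‖ ≤ 1 → ‖z.2‖ ≤ 1 →
      ((1 : ℂ) + ε * Q1 p z ≠ 0 ∧ 3 / 4 ≤ ‖1 + ε * Q1 p z‖) := by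
    intro z h1 h2
    have hq := abs_Q1_le p h1 h2
    have habs : ‖ε * Q1 p z‖ ≤ ‖ε‖ * Cp p := by
      rw [norm_mul]
      exact mul_le_mul_of_nonneg_left hq (norm_nonneg ε)
    have hge := abs_one_add_ge (ε * Q1 p z)
    have h34 : 3 / 4 ≤ ‖1 + ε * Q1 p z‖ := by linarith
    refine ⟨fun h0 => ?_, h34⟩
    rw [h0] at h34
    simp at h34
    linarith
  have hval : ∀ z : ℂ × ℂ, ‖z.1‖ < 1 → ‖z.2‖ < 1 →
      (-(Ring.inverse (fderiv ℂ (fun z : ℂ × ℂ => (z.1 + ε * ev p z, z.2)) z))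
        ((z.1 + ε * ev p z, z.2)) : ℂ × ℂ)
      = (-((z.1 + ε * ev p z - ε * Q2 p z * z.2) / (1 + ε * Q1 p z)), -z.2) := by
    intro z h1 h2
    have hc := (hcne z h1.le h2.le).1
    rw [hgD z, ringInverse_Bmat _ hc, Bmatinv]
    rw [Prod.ext_iff]
    constructor
    · simp only [Bmat_apply, Prod.fst_neg, Prod.snd_neg]
      field_simp
      ring
    · simp [Bmat_apply]
  refine ⟨?_, ?_, ?_, ?_⟩
  · show ((0 : ℂ × ℂ).1 + ε * ev p 0, (0 : ℂ × ℂ).2) = 0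
    rw [hP0]
    simp [Prod.ext_iff]
  · rw [hgD 0, hQ10, hQ20]
    simpa using Bmat_id
  · intro z hz
    rw [hgD z]
    exact isUnit_Bmat _ (hcne z hz.1.le hz.2.le).1
  · -- memM2
    have hopen : IsOpen polydisc2 :=
      (isOpen_lt (continuous_norm.comp continuous_fst) continuous_const).inter
        (isOpen_lt (continuous_norm.comp continuous_snd) continuous_const)
    have h0mem : (0 : ℂ × ℂ) ∈ polydisc2 := by constructor <;> simp
    refine ⟨?_, ?_, ?_, ?_, ?_⟩
    · -- DifferentiableOn
      have hdiff : DifferentiableOn ℂ (fun z : ℂ × ℂ =>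
          ((-((z.1 + ε * ev p z - ε * Q2 p z * z.2) / (1 + ε * Q1 p z)), -z.2) : ℂ × ℂ))
          polydisc2 := by
        intro z hz
        refine DifferentiableAt.differentiableWithinAt ?_
        have hN : DifferentiableAt ℂ (fun z : ℂ × ℂ => z.1 + ε * ev p z - ε * Q2 p z * z.2) z :=
          ((differentiable_fst z).add
            (((hasFDerivAt_ev p z).differentiableAt).const_mul ε)).sub
            (((differentiable_Q2 p z).const_mul ε).mul (differentiable_snd z))
        have hD : DifferentiableAt ℂ (fun z : ℂ × ℂ => 1 + ε * Q1 p z) z :=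
          (differentiableAt_const _).add ((differentiable_Q1 p z).const_mul ε)
        have hDne : (1 : ℂ) + ε * Q1 p z ≠ 0 := (hcne z hz.1.le hz.2.le).1
        have hq : DifferentiableAt ℂ (fun z : ℂ × ℂ =>
            (z.1 + ε * ev p z - ε * Q2 p z * z.2) / (1 + ε * Q1 p z)) z := by
          simp only [div_eq_mul_inv]
          exact hN.mul (hD.inv hDne)
        exact hq.neg.prodMk (differentiable_snd z).neg
      exact hdiff.congr fun z hz => hval z hz.1 hz.2
    · -- value at 0
      have h00 := hval 0 (by simp) (by simp)
      simp only [h00]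
      simp [hP0, Prod.ext_iff]
    · -- fderiv at 0
      have heq : (fun z : ℂ × ℂ =>
            -(Ring.inverse (fderiv ℂ (fun z : ℂ × ℂ => (z.1 + ε * ev p z, z.2)) z))
              ((z.1 + ε * ev p z, z.2)))
          =ᶠ[nhds (0 : ℂ × ℂ)] (fun z : ℂ × ℂ =>
            ((-((z.1 + ε * ev p z - ε * Q2 p z * z.2) / (1 + ε * Q1 p z)), -z.2) : ℂ × ℂ)) :=
        Filter.eventuallyEq_of_mem (hopen.mem_nhds h0mem) fun z hz => hval z hz.1 hz.2
      rw [heq.fderiv_eq]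
      have hNder : HasFDerivAt (fun z : ℂ × ℂ => z.1 + ε * ev p z - ε * Q2 p z * z.2)
          (ContinuousLinearMap.fst ℂ ℂ ℂ) 0 := by
        have h1 : HasFDerivAt (fun z : ℂ × ℂ => z.1 + ε * ev p z)
            (ContinuousLinearMap.fst ℂ ℂ ℂ + ε • lin2 (Q1 p 0) (Q2 p 0)) 0 :=
          hasFDerivAt_fst.add ((hasFDerivAt_ev p 0).const_mul ε)
        have hq2 : HasFDerivAt (fun z : ℂ × ℂ => ε * Q2 p z) (ε • fderiv ℂ (Q2 p) 0) 0 :=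
          ((differentiable_Q2 p 0).hasFDerivAt).const_mul ε
        have h2 := hq2.mul (hasFDerivAt_snd (p := (0 : ℂ × ℂ)))
        refine (h1.sub h2).congr_fderiv ?_
        rw [hlin]
        refine ContinuousLinearMap.ext fun w => ?_
        simp [hQ20]
      have hDder : HasFDerivAt (fun z : ℂ × ℂ => 1 + ε * Q1 p z) (ε • fderiv ℂ (Q1 p) 0) 0 :=
        (((differentiable_Q1 p 0).hasFDerivAt).const_mul ε).const_add 1
      have hD0 : (1 : ℂ) = 1 + ε * Q1 p 0 := by simp [hQ10]
      have hinv := (hasDerivAt_inv (x := (1 : ℂ)) one_ne_zero).comp_hasFDerivAt_of_eq 0 hDder hD0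
      have hmul := hNder.mul hinv
      have hfinal1 : HasFDerivAt (fun z : ℂ × ℂ =>
          -((z.1 + ε * ev p z - ε * Q2 p z * z.2) / (1 + ε * Q1 p z)))
          (-(ContinuousLinearMap.fst ℂ ℂ ℂ)) 0 := by
        have heqfun : (fun z : ℂ × ℂ =>
            -((z.1 + ε * ev p z - ε * Q2 p z * z.2) / (1 + ε * Q1 p z)))
            = fun z : ℂ × ℂ =>
              -((z.1 + ε * ev p z - ε * Q2 p z * z.2) * (1 + ε * Q1 p z)⁻¹) := by
          funext z; rw [div_eq_mul_inv]
        rw [heqfun]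
        refine (hmul.neg).congr_fderiv ?_
        refine ContinuousLinearMap.ext fun w => ?_
        simp [hP0, hQ10, hQ20]
      have h2snd : HasFDerivAt (fun z : ℂ × ℂ => -z.2)
          (-(ContinuousLinearMap.snd ℂ ℂ ℂ)) 0 := (hasFDerivAt_snd).neg
      have hfinal := (hfinal1.prodMk h2snd).congr_fderiv (?_ :
        (-(ContinuousLinearMap.fst ℂ ℂ ℂ)).prod (-(ContinuousLinearMap.snd ℂ ℂ ℂ))
          = -(ContinuousLinearMap.id ℂ (ℂ × ℂ)))
      · exact hfinal.fderiv
      · refine ContinuousLinearMap.ext fun w => ?_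
        simp [Prod.ext_iff]
    · -- first Re condition
      intro z hz hz1 hle
      simp only [hval z hz.1 hz.2]
      have hcne2 := hcne z hz.1.le hz.2.le
      have hz1pos : 0 < ‖z.1‖ := norm_pos_iff.mpr hz1
      set N := z.1 + ε * ev p z - ε * Q2 p z * z.2 with hNdef
      set c := 1 + ε * Q1 p z with hcdef
      have hcne' : c ≠ 0 := hcne2.1
      have hc34 : 3 / 4 ≤ ‖c‖ := hcne2.2
      have key : ‖N / (c * z.1) - 1‖ < 1 := by
        have hnum : N - c * z.1 = ε * (ev p z - Q2 p z * z.2 - Q1 p z * z.1) := by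
          rw [hNdef, hcdef]; ring
        have hcz : c * z.1 ≠ 0 := mul_ne_zero hcne' hz1
        have heq2 : N / (c * z.1) - 1
            = (ε * (ev p z - Q2 p z * z.2 - Q1 p z * z.1)) / (c * z.1) := by
          rw [← hnum]
          rw [eq_div_iff hcz, sub_mul, div_mul_cancel₀ _ hcz, one_mul]
        rw [heq2, norm_div, norm_mul, norm_mul]
        have hb1 : ‖ev p z‖ ≤ Cp p * ‖z.1‖ :=
          abs_ev_le p hconst hz.1.le hle
        have hb2 : ‖Q2 p z * z.2‖ ≤ Cp p * ‖z.1‖ :=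
          abs_Q2_mul_le p hz.1.le hle
        have hb3 : ‖Q1 p z * z.1‖ ≤ Cp p * ‖z.1‖ := by
          rw [norm_mul]
          exact mul_le_mul_of_nonneg_right (abs_Q1_le p hz.1.le (hle.trans hz.1.le))
            (norm_nonneg _)
        have htri : ‖ev p z - Q2 p z * z.2 - Q1 p z * z.1‖
            ≤ ‖ev p z‖ + ‖Q2 p z * z.2‖ + ‖Q1 p z * z.1‖ := by
          have t1 := norm_sub_le (ev p z - Q2 p z * z.2) (Q1 p z * z.1)
          have t2 := norm_sub_le (ev p z) (Q2 p z * z.2)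
          linarith
        have hdenpos : 0 < ‖c‖ * ‖z.1‖ :=
          mul_pos (lt_of_lt_of_le (by norm_num) hc34) hz1pos
        rw [div_lt_one hdenpos]
        have hstep1 : ‖ε‖ * ‖ev p z - Q2 p z * z.2 - Q1 p z * z.1‖
            ≤ ‖ε‖ * (3 * (Cp p * ‖z.1‖)) := by
          refine mul_le_mul_of_nonneg_left ?_ (norm_nonneg ε)
          linarith
        have hstep2 : ‖ε‖ * (3 * (Cp p * ‖z.1‖))
            < (3 / 4) * ‖z.1‖ := by
          nlinarith [hz1pos]
        have hstep3 : (3 / 4) * ‖z.1‖ ≤ ‖c‖ * ‖z.1‖ :=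
          mul_le_mul_of_nonneg_right hc34 hz1pos.le
        linarith
      have hre1 : 0 < (N / (c * z.1)).re := by
        have habs := Complex.abs_re_le_norm (N / (c * z.1) - 1)
        have hsub : (N / (c * z.1) - 1).re = (N / (c * z.1)).re - 1 := by
          simp [Complex.sub_re]
        rw [hsub] at habs
        have h1 := (abs_lt.mp (habs.trans_lt key)).1
        linarith
      show ((-(N / c)) / z.1).re ≤ 0
      have hrw : (-(N / c)) / z.1 = -(N / (c * z.1)) := by
        rw [neg_div, div_div]
      rw [hrw, Complex.neg_re]
      linarith
    · -- second Re condition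
      intro z hz hz2 hle
      simp only [hval z hz.1 hz.2]
      show ((-z.2) / z.2).re ≤ 0
      rw [neg_div, div_self hz2]
      norm_num
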